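/- arXiv:1907.02798 — 3 statements merged into one kernel-verified Lean document; each statement's English description precedes it below -/
import Mathlib

section
/- Let k and n be integers with 2 ≤ k ≤ n, and let G be a group such that [γ_k(G), γ_n(G)] is finite and |x^{γ_n(G)}| ≤ m for every x ∈ G. Then for every γ_n-value g ∈ X_n(G) one has |g^{γ_{k-1}(G)}| ≤ m^{n-k+2} · |[γ_k(G), γ_n(G)]|. -/
/-- The set of conjugates of `x` by elements of `S`: `x^S = {x^s : s ∈ S}`. -/
def conjSet {G : Type*} [Group G] (x : G) (S : Set G) : Set G :=
  (fun s => s⁻¹ * x * s) '' S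

/-- The commutator `[a,b] = a⁻¹b⁻¹ab`. -/
def commP {G : Type*} [Group G] (a b : G) : G := a⁻¹ * b⁻¹ * a * b

/-- `gammaVals G k` is the set of `γ_{k+1}`-values in `G`, i.e. elements of the form
`[x_1,…,x_{k+1}]` (left-normed commutators); so `X_n(G) = gammaVals G (n-1)`. -/
def gammaVals (G : Type*) [Group G] : ℕ → Set G
  | 0 => Set.univ
  | k + 1 => {z | ∃ x ∈ gammaVals G k, ∃ y : G, z = commP x y}

section Aux
variable {G : Type*} [Group G]

open scoped commutatorElement in
lemma commP_eq_commutatorElement (a b : G) : commP a b = ⁅a⁻¹, b⁻¹⁆ := by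
  simp [commP, commutatorElement_def, mul_assoc]

lemma commP_mem_commutator {H K : Subgroup G} {a b : G} (ha : a ∈ H) (hb : b ∈ K) :
    commP a b ∈ ⁅H, K⁆ := by
  rw [commP_eq_commutatorElement]
  exact Subgroup.commutator_mem_commutator (inv_mem ha) (inv_mem hb)

lemma commP_inv (a b : G) : (commP a b)⁻¹ = commP b a := by
  simp [commP, mul_assoc]

lemma lcs_succ' (n : ℕ) :
    (⊤ : Subgroup G).lowerCentralSeries (n + 1) = ⁅(⊤ : Subgroup G).lowerCentralSeries n, ⊤⁆ := rfl

/-- three subgroups lemma, `≤ N` version -/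
lemma three_subgroups {H₁ H₂ H₃ N : Subgroup G} [N.Normal]
    (h1 : ⁅⁅H₂, H₃⁆, H₁⁆ ≤ N) (h2 : ⁅⁅H₃, H₁⁆, H₂⁆ ≤ N) : ⁅⁅H₁, H₂⁆, H₃⁆ ≤ N := by
  let f := QuotientGroup.mk' N
  have key : ∀ K L : Subgroup G, ⁅⁅K, L⁆, N⁆ ≤ N := fun K L =>
    le_trans (Subgroup.commutator_le_right _ _) le_rfl
  have h1' : ⁅⁅H₂.map f, H₃.map f⁆, H₁.map f⁆ = ⊥ := by
    rw [← Subgroup.map_commutator, ← Subgroup.map_commutator]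
    rw [Subgroup.map_eq_bot_iff, QuotientGroup.ker_mk']
    exact h1
  have h2' : ⁅⁅H₃.map f, H₁.map f⁆, H₂.map f⁆ = ⊥ := by
    rw [← Subgroup.map_commutator, ← Subgroup.map_commutator]
    rw [Subgroup.map_eq_bot_iff, QuotientGroup.ker_mk']
    exact h2
  have h3 := Subgroup.commutator_commutator_eq_bot_of_rotate h1' h2'
  rw [← Subgroup.map_commutator, ← Subgroup.map_commutator, Subgroup.map_eq_bot_iff,
    QuotientGroup.ker_mk'] at h3
  exact h3

/-- `⁅γ_{a+1}, γ_{b+1}⁆ ≤ γ_{a+b+2}` (0-indexed lower central series). -/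
lemma lcs_commutator_le : ∀ a b : ℕ,
    ⁅(⊤ : Subgroup G).lowerCentralSeries a, (⊤ : Subgroup G).lowerCentralSeries b⁆ ≤ (⊤ : Subgroup G).lowerCentralSeries (a + b + 1) := by
  intro a
  induction a with
  | zero =>
    intro b
    have : (⊤ : Subgroup G).lowerCentralSeries 0 = (⊤ : Subgroup G) := rfl
    rw [this, Subgroup.commutator_comm]
    rw [show (0 : ℕ) + b + 1 = b + 1 by omega, lcs_succ']
  | succ a ih =>
    intro b
    rw [lcs_succ']
    have h1 : ⁅⁅(⊤ : Subgroup G), (⊤ : Subgroup G).lowerCentralSeries b⁆, (⊤ : Subgroup G).lowerCentralSeries a⁆ ≤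
        (⊤ : Subgroup G).lowerCentralSeries (a + 1 + b + 1) := by
      rw [Subgroup.commutator_comm (⊤ : Subgroup G), ← lcs_succ']
      calc ⁅(⊤ : Subgroup G).lowerCentralSeries (b+1), (⊤ : Subgroup G).lowerCentralSeries a⁆
          = ⁅(⊤ : Subgroup G).lowerCentralSeries a, (⊤ : Subgroup G).lowerCentralSeries (b+1)⁆ := Subgroup.commutator_comm _ _
        _ ≤ (⊤ : Subgroup G).lowerCentralSeries (a + (b+1) + 1) := ih _
        _ = (⊤ : Subgroup G).lowerCentralSeries (a + 1 + b + 1) := by ring_nf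
    have h2 : ⁅⁅(⊤ : Subgroup G).lowerCentralSeries b, (⊤ : Subgroup G).lowerCentralSeries a⁆, (⊤ : Subgroup G)⁆ ≤
        (⊤ : Subgroup G).lowerCentralSeries (a + 1 + b + 1) := by
      have hba : ⁅(⊤ : Subgroup G).lowerCentralSeries b, (⊤ : Subgroup G).lowerCentralSeries a⁆ ≤
          (⊤ : Subgroup G).lowerCentralSeries (b + a + 1) := by
        rw [Subgroup.commutator_comm]
        rw [show b + a + 1 = a + b + 1 by omega]
        exact ih b
      calc ⁅⁅(⊤ : Subgroup G).lowerCentralSeries b, (⊤ : Subgroup G).lowerCentralSeries a⁆, (⊤ : Subgroup G)⁆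
          ≤ ⁅(⊤ : Subgroup G).lowerCentralSeries (b + a + 1), (⊤ : Subgroup G)⁆ :=
            Subgroup.commutator_mono hba le_rfl
        _ = (⊤ : Subgroup G).lowerCentralSeries (b + a + 2) := (lcs_succ' _).symm
        _ ≤ (⊤ : Subgroup G).lowerCentralSeries (a + 1 + b + 1) := by
            apply Subgroup.lowerCentralSeries_antitone ⊤; omega
    exact three_subgroups h1 h2


lemma gammaVals_subset_lcs : ∀ r : ℕ, ∀ g ∈ gammaVals G r, g ∈ (⊤ : Subgroup G).lowerCentralSeries r := by
  intro r
  induction r with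
  | zero => intro g _; exact Subgroup.mem_top g
  | succ r ih =>
    rintro g ⟨w, hw, y, rfl⟩
    rw [lcs_succ']
    exact commP_mem_commutator (ih w hw) (Subgroup.mem_top _)

lemma ncard_image2_le {α β γ : Type*} (f : α → β → γ) {A : Set α} {B : Set β}
    (hA : A.Finite) (hB : B.Finite) :
    (Set.image2 f A B).Finite ∧ (Set.image2 f A B).ncard ≤ A.ncard * B.ncard := by
  constructor
  · exact hA.image2 f hB
  · rw [← Set.image_prod]
    refine (Set.ncard_image_le (hA.prod hB)).trans ?_
    have : (A ×ˢ B).ncard = A.ncard * B.ncard := by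
      rw [← Nat.card_coe_set_eq, ← Nat.card_coe_set_eq, ← Nat.card_coe_set_eq]
      rw [Nat.card_congr (Equiv.Set.prod A B), Nat.card_prod]
    omega

lemma core_identity (w x h : G) :
    h⁻¹ * (commP w x) * h =
      (commP w x) * (commP (commP w x) (commP w h)) * (commP (commP w h) x) *
        (x⁻¹ * (commP w (h⁻¹ * x * h * x⁻¹)) * x) *
        (x⁻¹ * ((commP (commP w (h⁻¹ * x * h * x⁻¹)) (commP w h)) *
          (commP (commP w h) (h⁻¹ * x * h * x⁻¹))) * x) := by
  simp only [commP]
  group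

end Aux

section KeyInduction

variable {G : Type*} [Group G]

lemma key_induction (m k n : ℕ) (hk : 2 ≤ k) (hkn : k ≤ n)
    (hconj : ∀ x : G,
      (conjSet x (((⊤ : Subgroup G).lowerCentralSeries (n - 1) : Subgroup G) : Set G)).Finite ∧
      (conjSet x (((⊤ : Subgroup G).lowerCentralSeries (n - 1) : Subgroup G) : Set G)).ncard ≤ m) :
    ∀ i p : ℕ, p + i = n - 1 → k - 2 ≤ p →
      ∀ w ∈ gammaVals G (k - 2 + i),
        ∃ A : Set G, A.Finite ∧ A.ncard ≤ m ^ (i + 1) ∧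
          ∀ h ∈ (⊤ : Subgroup G).lowerCentralSeries p, ∃ a ∈ A,
            ∃ t ∈ (⁅(⊤ : Subgroup G).lowerCentralSeries (k - 1), (⊤ : Subgroup G).lowerCentralSeries (n - 1)⁆ : Subgroup G),
              h⁻¹ * w * h = w * a * t := by
  intro i
  induction i with
  | zero =>
    intro p hip hpk w _
    refine ⟨(fun v => w⁻¹ * v) '' conjSet w (((⊤ : Subgroup G).lowerCentralSeries (n - 1) : Subgroup G) : Set G),
      ((hconj w).1).image _, ?_, ?_⟩
    · rw [pow_one]
      exact le_trans (Set.ncard_image_le (hconj w).1) (hconj w).2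
    · intro h hh
      have hp : p = n - 1 := by omega
      subst hp
      refine ⟨w⁻¹ * (h⁻¹ * w * h), Set.mem_image_of_mem _ ⟨h, hh, rfl⟩, 1, one_mem _, by group⟩
  | succ i ih =>
    intro p hip hpk w hw
    obtain ⟨w0, hw0, x, rfl⟩ := hw
    obtain ⟨A, hAfin, hAcard, hA⟩ := ih (p + 1) (by omega) (by omega) w0 hw0
    -- the set Φ of values [c, x] for c ∈ γ_n
    set Φ : Set G :=
      (fun v => v⁻¹ * x) '' conjSet x (((⊤ : Subgroup G).lowerCentralSeries (n - 1) : Subgroup G) : Set G)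
      with hΦdef
    have hΦfin : Φ.Finite := ((hconj x).1).image _
    have hΦcard : Φ.ncard ≤ m := le_trans (Set.ncard_image_le (hconj x).1) (hconj x).2
    obtain ⟨hA'fin, hA'le⟩ := ncard_image2_le (fun u v => u * (x⁻¹ * v * x)) hΦfin hAfin
    refine ⟨Set.image2 (fun u v => u * (x⁻¹ * v * x)) Φ A, hA'fin, ?_, ?_⟩
    · refine hA'le.trans ?_
      calc Φ.ncard * A.ncard ≤ m * m ^ (i + 1) := Nat.mul_le_mul hΦcard hAcard
        _ = m ^ (i + 1 + 1) := by ring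
    · intro h hh
      -- memberships
      have hw0L : w0 ∈ (⊤ : Subgroup G).lowerCentralSeries (k - 2 + i) := gammaVals_subset_lcs _ w0 hw0
      have hmemd : h⁻¹ * x * h * x⁻¹ ∈ (⊤ : Subgroup G).lowerCentralSeries (p + 1) := by
        have h1 : commP h x ∈ (⊤ : Subgroup G).lowerCentralSeries (p + 1) := by
          rw [lcs_succ']
          exact commP_mem_commutator hh (Subgroup.mem_top _)
        have h2 : x * (commP h x)⁻¹ * x⁻¹ ∈ (⊤ : Subgroup G).lowerCentralSeries (p + 1) :=
          Subgroup.Normal.conj_mem (Subgroup.lowerCentralSeries_normal _ _) _ (inv_mem h1) x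
        have h3 : h⁻¹ * x * h * x⁻¹ = x * (commP h x)⁻¹ * x⁻¹ := by
          simp only [commP]; group
        rw [h3]; exact h2
      have hdk : h⁻¹ * x * h * x⁻¹ ∈ (⊤ : Subgroup G).lowerCentralSeries (k - 1) := by
        refine Subgroup.lowerCentralSeries_antitone ⊤ (by omega) hmemd
      have hc : commP w0 h ∈ (⊤ : Subgroup G).lowerCentralSeries (n - 1) := by
        have := commP_mem_commutator hw0L hh
        have h2 := lcs_commutator_le (G := G) (k - 2 + i) p
        refine Subgroup.lowerCentralSeries_antitone ⊤ (show n - 1 ≤ k - 2 + i + p + 1 by omega) (h2 this)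
      have hβmem : commP w0 (h⁻¹ * x * h * x⁻¹) ∈ (⊤ : Subgroup G).lowerCentralSeries (k - 2 + i + (p + 1) + 1) :=
        lcs_commutator_le (G := G) (k - 2 + i) (p + 1) (commP_mem_commutator hw0L hmemd)
      have hβk : commP w0 (h⁻¹ * x * h * x⁻¹) ∈ (⊤ : Subgroup G).lowerCentralSeries (k - 1) :=
        Subgroup.lowerCentralSeries_antitone ⊤ (by omega) hβmem
      have hwk : commP w0 x ∈ (⊤ : Subgroup G).lowerCentralSeries (k - 1) := by
        have : commP w0 x ∈ (⊤ : Subgroup G).lowerCentralSeries (k - 2 + i + 1) := by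
          rw [lcs_succ']
          exact commP_mem_commutator hw0L (Subgroup.mem_top _)
        exact Subgroup.lowerCentralSeries_antitone ⊤ (by omega) this
      -- apply induction hypothesis at d'
      obtain ⟨a, haA, t'', ht''T, heq⟩ := hA (h⁻¹ * x * h * x⁻¹) hmemd
      have hβeq : commP w0 (h⁻¹ * x * h * x⁻¹) = a * t'' := by
        have h4 : commP w0 (h⁻¹ * x * h * x⁻¹) =
            w0⁻¹ * ((h⁻¹ * x * h * x⁻¹)⁻¹ * w0 * (h⁻¹ * x * h * x⁻¹)) := by
          simp only [commP]; group
        rw [h4, heq]; group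
      -- T-membership of the error terms
      have ht1 : commP (commP w0 x) (commP w0 h) ∈
          (⁅(⊤ : Subgroup G).lowerCentralSeries (k - 1), (⊤ : Subgroup G).lowerCentralSeries (n - 1)⁆ : Subgroup G) :=
        commP_mem_commutator hwk hc
      have ht2 : commP (commP w0 h) (h⁻¹ * x * h * x⁻¹) ∈
          (⁅(⊤ : Subgroup G).lowerCentralSeries (k - 1), (⊤ : Subgroup G).lowerCentralSeries (n - 1)⁆ : Subgroup G) := by
        rw [← commP_inv]
        exact inv_mem (commP_mem_commutator hdk hc)
      have ht3 : commP (a * t'') (commP w0 h) ∈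
          (⁅(⊤ : Subgroup G).lowerCentralSeries (k - 1), (⊤ : Subgroup G).lowerCentralSeries (n - 1)⁆ : Subgroup G) := by
        rw [← hβeq]
        exact commP_mem_commutator hβk hc
      -- the Φ-element
      have hφmem : commP (commP w0 h) x ∈ Φ := by
        refine ⟨(commP w0 h)⁻¹ * x * (commP w0 h), ⟨commP w0 h, hc, rfl⟩, ?_⟩
        simp only [commP]; group
      -- assemble
      refine ⟨(commP (commP w0 h) x) * (x⁻¹ * a * x),
        Set.mem_image2_of_mem hφmem haA, ?_⟩
      set Y : G := (commP (commP w0 h) x) * (x⁻¹ * a * x) with hYdef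
      refine ⟨(Y⁻¹ * commP (commP w0 x) (commP w0 h) * Y) * (x⁻¹ * t'' * x) *
        (x⁻¹ * (commP (a * t'') (commP w0 h) * commP (commP w0 h) (h⁻¹ * x * h * x⁻¹)) * x),
        ?_, ?_⟩
      · refine mul_mem (mul_mem ?_ ?_) ?_
        · simpa using Subgroup.Normal.conj_mem inferInstance _ ht1 Y⁻¹
        · simpa using Subgroup.Normal.conj_mem inferInstance _ ht''T x⁻¹
        · simpa using Subgroup.Normal.conj_mem inferInstance _ (mul_mem ht3 ht2) x⁻¹
      · have CI := core_identity w0 x h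
        rw [hβeq] at CI
        rw [CI, hYdef]
        simp only [commP]
        group

end KeyInduction

/-- Let `2 ≤ k ≤ n` and let `G` be a group such that `[γ_k(G), γ_n(G)]` is finite and
`|x^{γ_n(G)}| ≤ m` for every `x ∈ G`. Then for every `γ_n`-value `g ∈ X_n(G)` one has
`|g^{γ_{k-1}(G)}| ≤ m^(n-k+2) * |[γ_k(G), γ_n(G)]|`. -/
theorem bounded_conjugates_in_gamma_pred (m k n : ℕ) (hk : 2 ≤ k) (hkn : k ≤ n)
    (G : Type*) [Group G]
    (hfin : Finite (⁅(⊤ : Subgroup G).lowerCentralSeries (k - 1), (⊤ : Subgroup G).lowerCentralSeries (n - 1)⁆ : Subgroup G))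
    (hconj : ∀ x : G,
      (conjSet x (((⊤ : Subgroup G).lowerCentralSeries (n - 1) : Subgroup G) : Set G)).Finite ∧
      (conjSet x (((⊤ : Subgroup G).lowerCentralSeries (n - 1) : Subgroup G) : Set G)).ncard ≤ m) :
    ∀ g ∈ gammaVals G (n - 1),
      (conjSet g (((⊤ : Subgroup G).lowerCentralSeries (k - 2) : Subgroup G) : Set G)).Finite ∧
      (conjSet g (((⊤ : Subgroup G).lowerCentralSeries (k - 2) : Subgroup G) : Set G)).ncard ≤
        m ^ (n - k + 2) *
          Nat.card (⁅(⊤ : Subgroup G).lowerCentralSeries (k - 1), (⊤ : Subgroup G).lowerCentralSeries (n - 1)⁆ : Subgroup G) := by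
  intro g hg
  have hgv : g ∈ gammaVals G (k - 2 + (n - k + 1)) := by
    rw [show k - 2 + (n - k + 1) = n - 1 by omega]
    exact hg
  obtain ⟨A, hAfin, hAcard, hA⟩ :=
    key_induction m k n hk hkn hconj (n - k + 1) (k - 2) (by omega) le_rfl g hgv
  have hTfin : ((⁅(⊤ : Subgroup G).lowerCentralSeries (k - 1), (⊤ : Subgroup G).lowerCentralSeries (n - 1)⁆ : Subgroup G) :
      Set G).Finite := Set.finite_coe_iff.mp hfin
  obtain ⟨hIfin, hIle⟩ := ncard_image2_le (fun a t => g * a * t) hAfin hTfin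
  have hsub : conjSet g (((⊤ : Subgroup G).lowerCentralSeries (k - 2) : Subgroup G) : Set G) ⊆
      Set.image2 (fun a t => g * a * t) A
        ((⁅(⊤ : Subgroup G).lowerCentralSeries (k - 1), (⊤ : Subgroup G).lowerCentralSeries (n - 1)⁆ : Subgroup G) : Set G) := by
    rintro v ⟨s, hs, rfl⟩
    obtain ⟨a, ha, t, ht, heq⟩ := hA s hs
    exact ⟨a, ha, t, ht, heq.symm⟩
  refine ⟨hIfin.subset hsub, ?_⟩
  refine (Set.ncard_le_ncard hsub hIfin).trans (hIle.trans ?_)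
  have h1 : A.ncard ≤ m ^ (n - k + 2) := by
    rw [show n - k + 2 = n - k + 1 + 1 by omega]; exact hAcard
  have h2 : ((⁅(⊤ : Subgroup G).lowerCentralSeries (k - 1), (⊤ : Subgroup G).lowerCentralSeries (n - 1)⁆ : Subgroup G) :
      Set G).ncard =
      Nat.card (⁅(⊤ : Subgroup G).lowerCentralSeries (k - 1), (⊤ : Subgroup G).lowerCentralSeries (n - 1)⁆ : Subgroup G) :=
    (Nat.card_coe_set_eq _).symm
  rw [h2] at *
  exact Nat.mul_le_mul h1 le_rfl
end

section
/- Let H be a group generated by a set X with X = X^{-1}, and let K be a subgroup of finite index m in H. Then every coset Kb of K in H contains an element g that can be written as a product of at most m−1 elements of X (where the empty product is the identity). -/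
/-- Let `H` be a group generated by a set `X` with `X = X⁻¹`, and let `K` be a subgroup of
finite index `m` in `H`. Then every coset `Kb` of `K` in `H` contains an element `g` that can
be written as a product of at most `m-1` elements of `X` (the empty product being `1`). -/
theorem short_coset_representatives (H : Type*) [Group H] (X : Set H)
    (hsym : X⁻¹ = X) (hgen : Subgroup.closure X = ⊤)
    (K : Subgroup H) (m : ℕ) (hm : 0 < m) (hindex : K.index = m) :
    ∀ b : H, ∃ g : H, (∃ k ∈ K, g = k * b) ∧
      ∃ l : List H, (∀ x ∈ l, x ∈ X) ∧ l.length ≤ m - 1 ∧ l.prod = g := by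
  haveI : K.FiniteIndex := ⟨by omega⟩
  haveI : Finite (H ⧸ K) := K.finite_quotient_of_finiteIndex
  -- every element of H is a product of elements of X
  have hmon : ∀ h : H, ∃ l : List H, (∀ x ∈ l, x ∈ X) ∧ l.prod = h := by
    intro h
    have h1 := Subgroup.closure_toSubmonoid X
    rw [hgen, hsym, Set.union_self] at h1
    have : h ∈ Submonoid.closure X := by
      rw [← h1]; exact Subgroup.mem_top h
    exact Submonoid.exists_list_of_mem_closure this
  -- the sets of cosets reachable with ≤ n generators
  set S : ℕ → Set (H ⧸ K) := fun n =>
    {c | ∃ l : List H, (∀ x ∈ l, x ∈ X) ∧ l.length ≤ n ∧ QuotientGroup.mk l.prod = c}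
    with hS
  have hSmono : Monotone S := by
    intro a b hab c ⟨l, h1, h2, h3⟩
    exact ⟨l, h1, h2.trans hab, h3⟩
  -- stability step
  have hstep : ∀ n, S n = S (n + 1) → S (n + 1) = S (n + 2) := by
    intro n hn
    refine le_antisymm (hSmono (by omega)) ?_
    rintro c ⟨l, h1, h2, h3⟩
    match l with
    | [] => exact ⟨[], by simp, by simp, h3⟩
    | x :: l' =>
      have hc' : (QuotientGroup.mk l'.prod : H ⧸ K) ∈ S n := by
        rw [hn]
        exact ⟨l', fun y hy => h1 y (List.mem_cons_of_mem _ hy), by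
          simpa using Nat.succ_le_succ_iff.mp h2, rfl⟩
      obtain ⟨l'', g1, g2, g3⟩ := hc'
      refine ⟨x :: l'', fun y hy => ?_, by simpa using g2, ?_⟩
      · rcases List.mem_cons.mp hy with rfl | hy
        · exact h1 y List.mem_cons_self
        · exact g1 y hy
      · rw [List.prod_cons, ← h3, List.prod_cons]
        have := QuotientGroup.eq.mp g3
        rw [QuotientGroup.eq]
        simpa [mul_assoc] using this
  have hstable : ∀ n, S n = S (n + 1) → ∀ k, S (n + k) = S n := by
    intro n hn k
    induction k with
    | zero => rfl
    | succ k ih =>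
      have : S (n + k) = S (n + k + 1) := by
        clear ih
        induction k with
        | zero => exact hn
        | succ k ih => exact hstep _ ih
      rw [show n + (k+1) = n + k + 1 by ring, ← this, ih]
  have hfull : ∀ n, S n = S (n + 1) → S n = Set.univ := by
    intro n hn
    refine Set.eq_univ_of_forall fun c => ?_
    obtain ⟨h, rfl⟩ := QuotientGroup.mk_surjective c
    obtain ⟨l, h1, h2⟩ := hmon h
    have : (QuotientGroup.mk h : H ⧸ K) ∈ S (n + l.length) :=
      ⟨l, h1, by omega, by rw [h2]⟩
    rwa [hstable n hn l.length] at this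
  -- main claim: S (m-1) = univ
  have hkey : S (m - 1) = Set.univ := by
    by_cases hex : ∃ n ≤ m - 1, S n = S (n + 1)
    · obtain ⟨n, hn, heq⟩ := hex
      have := hfull n heq
      have h2 := hSmono hn
      rw [this] at h2
      exact Set.eq_univ_of_univ_subset h2
    · push_neg at hex
      exfalso
      have hcard : ∀ n ≤ m - 1, n + 1 ≤ (S n).ncard := by
        intro n hn
        induction n with
        | zero =>
          have h0 : (QuotientGroup.mk (1 : H) : H ⧸ K) ∈ S 0 := ⟨[], by simp, by simp, by simp⟩
          have := (Set.ncard_pos (Set.toFinite _)).mpr ⟨_, h0⟩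
          omega
        | succ n ih =>
          have hlt : S n ⊂ S (n + 1) :=
            lt_of_le_of_ne (hSmono (by omega)) (hex n (by omega))
          have := Set.ncard_lt_ncard hlt (Set.toFinite _)
          have := ih (by omega)
          omega
      have h1 := hcard (m - 1) le_rfl
      have h2 : (S (m - 1)).ncard ≤ m := by
        have := Set.ncard_le_ncard (Set.subset_univ (S (m - 1))) (Set.toFinite _)
        rwa [Set.ncard_univ, ← Subgroup.index_eq_card, hindex] at this
      have h3 := hex (m - 1) le_rfl
      -- m ≤ ncard (S (m-1)) ≤ m so S (m-1) = univ, contradicting non-stability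
      have huniv : S (m - 1) = Set.univ := by
        apply Set.eq_of_subset_of_ncard_le (Set.subset_univ _) _ (Set.toFinite _)
        rw [Set.ncard_univ, ← Subgroup.index_eq_card, hindex]
        omega
      apply h3
      refine le_antisymm (hSmono (by omega)) ?_
      rw [huniv]; exact Set.subset_univ _
  -- conclude
  intro b
  have : (QuotientGroup.mk b⁻¹ : H ⧸ K) ∈ S (m - 1) := hkey ▸ Set.mem_univ _
  obtain ⟨l, h1, h2, h3⟩ := this
  refine ⟨l.prod⁻¹, ⟨l.prod⁻¹ * b⁻¹, ?_, by group⟩,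
    (l.map fun x => x⁻¹).reverse, ?_, by simpa using h2, (List.prod_inv_reverse l).symm⟩
  · have := QuotientGroup.eq.mp h3
    simpa using this
  · intro y hy
    simp only [List.mem_reverse, List.mem_map] at hy
    obtain ⟨x, hx, rfl⟩ := hy
    rw [← hsym]; exact Set.inv_mem_inv.mpr (h1 x hx)
end

section
/- For all integers k, m, n ≥ 2 and every positive integer c there exists a constant C = C(m,n,c) such that: if G is any group in which |x^{γ_n(G)}| ≤ m for every x ∈ G and [γ_k(G), γ_n(G)] is finite with |[γ_k(G), γ_n(G)]| ≤ c, then for every x ∈ γ_{k−1}(G) the subgroup [γ_n(G), x] has order at most C. -/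
/-- `[H, a]`: the subgroup generated by all commutators `[h,a]` with `h ∈ H`. -/
def commSub {G : Type*} [Group G] (H : Subgroup G) (a : G) : Subgroup G :=
  Subgroup.closure {z | ∃ h ∈ H, z = commP h a}

open scoped commutatorElement

/-- For all integers `k, m, n ≥ 2` and every positive integer `c` there exists `C = C(m,n,c)`
such that: if `G` is any group in which `|x^{γ_n(G)}| ≤ m` for every `x ∈ G` and
`[γ_k(G), γ_n(G)]` is finite of order at most `c`, then for every `x ∈ γ_{k-1}(G)` the
subgroup `[γ_n(G), x]` has order at most `C`. -/
theorem bounded_commutator_with_element (k m n : ℕ) (hk : 2 ≤ k) (hm : 2 ≤ m) (hn : 2 ≤ n)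
    (c : ℕ) (hc : 0 < c) :
    ∃ C : ℕ, ∀ (G : Type*) [Group G],
      (∀ x : G,
        (conjSet x (((⊤ : Subgroup G).lowerCentralSeries (n - 1) : Subgroup G) : Set G)).Finite ∧
        (conjSet x (((⊤ : Subgroup G).lowerCentralSeries (n - 1) : Subgroup G) : Set G)).ncard ≤ m) →
      Finite (⁅(⊤ : Subgroup G).lowerCentralSeries (k - 1), (⊤ : Subgroup G).lowerCentralSeries (n - 1)⁆ : Subgroup G) →
      Nat.card (⁅(⊤ : Subgroup G).lowerCentralSeries (k - 1), (⊤ : Subgroup G).lowerCentralSeries (n - 1)⁆ : Subgroup G) ≤ c →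
      ∀ x ∈ (⊤ : Subgroup G).lowerCentralSeries (k - 2),
        Finite (commSub ((⊤ : Subgroup G).lowerCentralSeries (n - 1)) x) ∧
        Nat.card (commSub ((⊤ : Subgroup G).lowerCentralSeries (n - 1)) x) ≤ C := by

  refine ⟨m * c, ?_⟩
  intro G _ hconj hKfin hKcard x hx
  set N := (⊤ : Subgroup G).lowerCentralSeries (n - 1) with hN
  set K := (⁅(⊤ : Subgroup G).lowerCentralSeries (k - 1), N⁆ : Subgroup G) with hKdef
  haveI : K.Normal := Subgroup.commutator_normal _ _
  set S : Set G := {z | ∃ h ∈ N, z = commP h x} with hS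
  -- S is a translate of a conjugate set
  have hSeq : S = (fun t => t * x) '' conjSet x⁻¹ (N : Set G) := by
    ext z
    simp only [hS, Set.mem_setOf_eq, conjSet, Set.mem_image]
    constructor
    · rintro ⟨h, hh, rfl⟩
      exact ⟨h⁻¹ * x⁻¹ * h, ⟨h, hh, rfl⟩, by simp [commP, mul_assoc]⟩
    · rintro ⟨t, ⟨h, hh, rfl⟩, rfl⟩
      exact ⟨h, hh, by simp [commP, mul_assoc]⟩
  have hSfin : S.Finite := by rw [hSeq]; exact ((hconj x⁻¹).1.image _)
  have hScard : S.ncard ≤ m := by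
    rw [hSeq]
    exact le_trans (Set.ncard_image_le (hconj x⁻¹).1) (hconj x⁻¹).2
  -- each commutator lies in γ_k
  have key1 : ∀ h : G, commP h x ∈ (⊤ : Subgroup G).lowerCentralSeries (k - 1) := by
    intro h
    have hco : commP h x = ⁅x⁻¹, h⁻¹⁆⁻¹ := by
      simp only [commP, commutatorElement_def]; group
    have hstep : (⊤ : Subgroup G).lowerCentralSeries (k - 2 + 1)
        = ⁅(⊤ : Subgroup G).lowerCentralSeries (k - 2), (⊤ : Subgroup G)⁆ := rfl
    have hkk : k - 2 + 1 = k - 1 := by omega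
    rw [hkk] at hstep
    have hmem : ⁅x⁻¹, h⁻¹⁆ ∈ (⊤ : Subgroup G).lowerCentralSeries (k - 1) := by
      rw [hstep]
      exact Subgroup.commutator_mem_commutator (inv_mem hx) (Subgroup.mem_top _)
    rw [hco]; exact inv_mem hmem
  set φ := QuotientGroup.mk' K with hφ
  have h1x : commP (1 : G) x = 1 := by simp [commP]
  have hmul : ∀ h h' : G, h' ∈ N →
      φ (commP h x * commP h' x) = φ (commP (h * h') x) := by
    intro h h' hh'
    rw [QuotientGroup.mk'_apply, QuotientGroup.mk'_apply, QuotientGroup.eq]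
    have hid : (commP h x * commP h' x)⁻¹ * commP (h * h') x
        = (commP h' x)⁻¹ * ⁅(commP h x)⁻¹, h'⁻¹⁆ * ((commP h' x)⁻¹)⁻¹ := by
      simp only [commP, commutatorElement_def]; group
    rw [hid]
    have hκ : ⁅(commP h x)⁻¹, h'⁻¹⁆ ∈ K :=
      Subgroup.commutator_mem_commutator (inv_mem (key1 h)) (inv_mem hh')
    exact Subgroup.Normal.conj_mem ‹K.Normal› _ hκ _
  -- the image of S in G/K is a subgroup
  set T : Subgroup (G ⧸ K) :=
    { carrier := φ '' S
      one_mem' := ⟨commP 1 x, ⟨1, one_mem N, rfl⟩, by rw [h1x, map_one]⟩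
      mul_mem' := by
        rintro a b ⟨_, ⟨h, hh, rfl⟩, rfl⟩ ⟨_, ⟨h', hh', rfl⟩, rfl⟩
        exact ⟨commP (h * h') x, ⟨h * h', mul_mem hh hh', rfl⟩,
          by rw [← hmul h h' hh', map_mul]⟩
      inv_mem' := by
        rintro a ⟨_, ⟨h, hh, rfl⟩, rfl⟩
        refine ⟨commP h⁻¹ x, ⟨h⁻¹, inv_mem hh, rfl⟩, ?_⟩
        apply eq_inv_of_mul_eq_one_left
        rw [← map_mul, hmul h⁻¹ h hh, inv_mul_cancel, h1x, map_one] } with hT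
  have hmapH : (commSub N x).map φ = T := by
    rw [commSub, MonoidHom.map_closure]
    exact Subgroup.closure_eq T
  have hTfin : Finite T := (hSfin.image φ).to_subtype
  have hTcard : Nat.card T ≤ m := by
    have e1 : Nat.card T = (φ '' S).ncard := by
      rw [← Nat.card_coe_set_eq]; rfl
    rw [e1]
    exact le_trans (Set.ncard_image_le hSfin) hScard
  -- restrict the quotient map to H
  set H := commSub N x with hHdef
  set f := φ.domRestrict H with hf
  have hkerinj : Function.Injective
      (fun g : f.ker => (⟨(g.1 : G), by
        have h2 : φ (g.1 : G) = 1 := g.2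
        rwa [hφ, QuotientGroup.mk'_apply, QuotientGroup.eq_one_iff] at h2⟩ : K)) := by
    intro a b hab
    have hv : (a.1 : G) = (b.1 : G) := by
      have h3 := congrArg (fun z : K => (z : G)) hab
      simpa using h3
    exact Subtype.ext (Subtype.ext hv)
  have hkerfin : Finite f.ker := Finite.of_injective _ hkerinj
  have hkercard : Nat.card f.ker ≤ c :=
    le_trans (Nat.card_le_card_of_injective _ hkerinj) hKcard
  have hrange : f.range = T := by rw [hf, MonoidHom.domRestrict_range, hmapH]
  haveI : Finite f.range := by rw [hrange]; exact hTfin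
  haveI : Finite (H ⧸ f.ker) :=
    Finite.of_equiv _ (QuotientGroup.quotientKerEquivRange f).symm.toEquiv
  have e : (H : Type _) ≃ (H ⧸ f.ker) × f.ker := Subgroup.groupEquivQuotientProdSubgroup
  haveI hHfin : Finite H := Finite.of_equiv _ e.symm
  refine ⟨hHfin, ?_⟩
  have hcard : Nat.card H = Nat.card (H ⧸ f.ker) * Nat.card f.ker := by
    rw [Nat.card_congr e, Nat.card_prod]
  have hq : Nat.card (H ⧸ f.ker) = Nat.card f.range :=
    Nat.card_congr (QuotientGroup.quotientKerEquivRange f).toEquiv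
  rw [hcard, hq, hrange]
  exact Nat.mul_le_mul hTcard hkercard
end
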